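/- Let n ∈ ℝ^d be a unit vector, B ∈ ℝ^{d×(d-1)} with BᵀB = I_{d-1} and Bᵀn = 0, and G ∈ ℝ^{d×d} a matrix with G B = 0 (no-slip condition on the tangent space). Then for any μ, P ∈ ℝ, with t = μ(G + Gᵀ)n + P n, the tangential component τ = (I − n nᵀ)t satisfies τ = μ (B Bᵀ) (G n). -/
import Mathlib


open Matrix

lemma complete_basis (m : ℕ) (B : Matrix (Fin (m+1)) (Fin m) ℝ) (n : Fin (m+1) → ℝ)
    (hB : Bᵀ * B = 1) (hBn : Bᵀ.mulVec n = 0) (hn : n ⬝ᵥ n = 1) :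
    B * Bᵀ + vecMulVec n n = 1 := by
  set C : Matrix (Fin (m+1)) (Fin (m+1)) ℝ := Matrix.of fun i j => (Fin.snoc (B i) (n i) : Fin (m+1) → ℝ) j with hC
  have h1 : Cᵀ * C = 1 := by
    ext j k
    simp only [Matrix.mul_apply, Matrix.transpose_apply, Matrix.one_apply, hC, Matrix.of_apply]
    induction j using Fin.lastCases with
    | last =>
      induction k using Fin.lastCases with
      | last => simpa [Fin.snoc_last, dotProduct] using hn
      | cast k =>
        have := congrFun hBn k
        simp only [Matrix.mulVec, dotProduct, Matrix.transpose_apply, Pi.zero_apply] at this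
        simp only [Fin.snoc_last, Fin.snoc_castSucc]
        rw [if_neg (by simp [Fin.ext_iff, (k.isLt).ne'])]
        rw [← this]; congr 1; ext i; ring
    | cast j =>
      induction k using Fin.lastCases with
      | last =>
        have := congrFun hBn j
        simp only [Matrix.mulVec, dotProduct, Matrix.transpose_apply, Pi.zero_apply] at this
        simp only [Fin.snoc_last, Fin.snoc_castSucc]
        rw [if_neg (by simp [Fin.ext_iff, (j.isLt).ne])]
        exact this
      | cast k =>
        have := congrFun (congrFun hB j) k
        simp only [Matrix.mul_apply, Matrix.transpose_apply, Matrix.one_apply] at this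
        simp only [Fin.snoc_castSucc]
        rw [this]
        simp [Fin.ext_iff]
  have h2 : C * Cᵀ = 1 := mul_eq_one_comm.mp h1
  rw [← h2]
  ext i k
  simp only [Matrix.mul_apply, Matrix.transpose_apply, Matrix.add_apply,
    Matrix.vecMulVec_apply, hC, Matrix.of_apply]
  rw [Fin.sum_univ_castSucc]
  simp [Fin.snoc_castSucc, Fin.snoc_last]

/-- Simplification of the tangential component of the wall traction:
with no-slip condition `G B = 0`, traction `t = μ(G + Gᵀ)n + P n`, the
tangential part `τ = (I - n nᵀ) t` satisfies `τ = μ (B Bᵀ) (G n)`. -/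
theorem tangential_traction_simplification (d : ℕ)
    (B : Matrix (Fin d) (Fin (d - 1)) ℝ) (n : Fin d → ℝ)
    (G : Matrix (Fin d) (Fin d) ℝ) (μ P : ℝ)
    (hB : Bᵀ * B = 1) (hBn : Bᵀ.mulVec n = 0)
    (hn : n ⬝ᵥ n = 1) (hG : G * B = 0)
    (t τ : Fin d → ℝ)
    (ht : t = μ • ((G + Gᵀ).mulVec n) + P • n)
    (hτ : τ = (1 - vecMulVec n n).mulVec t) :
    τ = μ • ((B * Bᵀ).mulVec (G.mulVec n)) := by
  rcases d with _ | m
  · funext i; exact i.elim0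
  have hcomp : (1 : Matrix (Fin (m+1)) (Fin (m+1)) ℝ) - vecMulVec n n = B * Bᵀ := by
    have h := complete_basis m B n hB hBn hn
    exact (eq_sub_iff_add_eq.mpr h).symm
  have hBtG : Bᵀ * Gᵀ = 0 := by
    rw [← Matrix.transpose_mul, hG, Matrix.transpose_zero]
  have hBn' : (B * Bᵀ).mulVec n = 0 := by
    rw [← Matrix.mulVec_mulVec, hBn, Matrix.mulVec_zero]
  have key : (B * Bᵀ).mulVec (Gᵀ.mulVec n) = 0 := by
    have h0 : Bᵀ.mulVec (Gᵀ.mulVec n) = 0 := by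
      rw [Matrix.mulVec_mulVec, hBtG, Matrix.zero_mulVec]
    rw [← Matrix.mulVec_mulVec, h0, Matrix.mulVec_zero]
  rw [hτ, hcomp, ht, Matrix.mulVec_add, Matrix.mulVec_smul, Matrix.mulVec_smul, hBn',
    smul_zero, add_zero, Matrix.add_mulVec, Matrix.mulVec_add, key, add_zero]
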